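/- For any vertex v of the turn graph and any taut admissible surface S with weight vector u(S), F_v(u(S)) = n(S); in particular F_v(u(S)) = F_{v'}(u(S)) for all vertices v, v'. -/

import Mathlib

/-- Edge relation of the turn graph Γ(w). -/
def TurnEdge {β : Type*} {ℓ : ℕ} (x : ZMod ℓ → FreeGroup β) (i j : ZMod ℓ) : Prop :=
  (x i)⁻¹ = x (j + 1)

/-- The duality involution on edges: `(i,j) ↦ (j+1, i-1)`. -/
def dualEdge {ℓ : ℕ} (e : ZMod ℓ × ZMod ℓ) : ZMod ℓ × ZMod ℓ :=
  (e.2 + 1, e.1 - 1)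

/-- A closed directed walk, as the cyclic list of visited vertices. -/
def IsClosedWalk {V : Type*} (Adj : V → V → Prop) (l : List V) : Prop :=
  l ≠ [] ∧ ∀ p ∈ l.zip (l.rotate 1), Adj p.1 p.2

/-- The multiset of directed edges traversed by the circuit `l`. -/
def cycEdges {V : Type*} (l : List V) : Multiset (V × V) :=
  (l.zip (l.rotate 1) : List (V × V))

/-- Combinatorial model of a taut admissible surface (cf. the paper): turn circuits
are embedded circuits in the turn graph and the 1-handles pair edge-traversals in
dual pairs. -/
structure TautAdmSurface (ℓ : ℕ) (Edge : ZMod ℓ → ZMod ℓ → Prop) where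
  circuits : Multiset (List (ZMod ℓ))
  nonempty : circuits ≠ 0
  closed : ∀ c ∈ circuits, IsClosedWalk Edge c
  embedded : ∀ c ∈ circuits, c.Nodup
  handles : Multiset.map dualEdge (circuits.bind cycEdges) = circuits.bind cycEdges

/-- `F_v(u) = Σᵢ uᵢ · (number of times the embedded circuit αᵢ passes through v)`. -/
def Fvert {ℓ k : ℕ} (α : Fin k → List (ZMod ℓ)) (u : Fin k → ℕ) (v : ZMod ℓ) : ℕ :=
  ∑ i, u i * (α i).count v

/-- For any vertex `v` of the turn graph and any taut admissible surface `S` (with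
boundary labeled `w^{n}`, so that the total number of handle traversals is `n·|w|`)
with weight vector `u = u(S)`, one has `F_v(u(S)) = n(S)`; in particular
`F_v(u(S)) = F_{v'}(u(S))` for all vertices `v, v'`. -/
private lemma bind_nsmul_aux {A B : Type*} (n : ℕ) (s : Multiset A) (f : A → Multiset B) :
    (n • s).bind f = n • s.bind f := by
  induction n with
  | zero => simp
  | succ m ih => simp [add_nsmul, Multiset.add_bind, ih]

theorem Fvert_eq_degree
    {β : Type*} {ℓ k : ℕ} (hℓ : 0 < ℓ) (x : ZMod ℓ → FreeGroup β)
    (hred : ∀ i : ZMod ℓ, (x i)⁻¹ ≠ x (i + 1))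
    (α : Fin k → List (ZMod ℓ))
    (hα : ∀ i, IsClosedWalk (TurnEdge x) (α i) ∧ (α i).Nodup)
    (S : TautAdmSurface ℓ (TurnEdge x)) (n : ℕ)
    (hdeg : Multiset.card (S.circuits.bind cycEdges) = n * ℓ)
    (u : Fin k → ℕ)
    (hu : S.circuits = ∑ i, u i • ({α i} : Multiset (List (ZMod ℓ)))) :
    (∀ v : ZMod ℓ, Fvert α u v = n) ∧
    (∀ v v' : ZMod ℓ, Fvert α u v = Fvert α u v') := by
  classical
  haveI : NeZero ℓ := ⟨hℓ.ne'⟩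
  set T := S.circuits.bind cycEdges with hT
  have hlen : ∀ l : List (ZMod ℓ), (l.rotate 1).length = l.length := fun l => List.length_rotate l 1
  have hmapfst : T.map Prod.fst = S.circuits.bind (fun c => (c : Multiset (ZMod ℓ))) := by
    rw [hT, Multiset.map_bind]
    congr 1; funext c
    simp only [cycEdges]
    rw [Multiset.map_coe, List.map_fst_zip (by rw [hlen])]
  have hmapsnd : T.map Prod.snd = S.circuits.bind (fun c => (c : Multiset (ZMod ℓ))) := by
    rw [hT, Multiset.map_bind]
    congr 1; funext c
    simp only [cycEdges]
    rw [Multiset.map_coe, List.map_snd_zip (by rw [hlen])]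
    exact Multiset.coe_eq_coe.mpr (c.rotate_perm 1)
  set f : ZMod ℓ → ℕ := fun v => Multiset.count v (T.map Prod.fst) with hf
  have hstep : ∀ v : ZMod ℓ, f v = f (v - 1) := by
    intro v
    have h1 : T.map Prod.fst = (T.map Prod.snd).map (fun a => a + 1) := by
      conv_lhs => rw [hT, ← S.handles]
      rw [Multiset.map_map, Multiset.map_map, ← hT]
      rfl
    have hinj : Function.Injective (fun a : ZMod ℓ => a + 1) := fun a b h => by
      simpa using h
    have h2 : Multiset.count ((v - 1) + 1) ((T.map Prod.snd).map (fun a => a + 1))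
        = Multiset.count (v - 1) (T.map Prod.snd) :=
      Multiset.count_map_eq_count' _ _ hinj _
    rw [sub_add_cancel] at h2
    show Multiset.count v (T.map Prod.fst) = Multiset.count (v - 1) (T.map Prod.fst)
    conv_lhs => rw [h1]
    rw [h2, hmapsnd, ← hmapfst]
  have hconst : ∀ v v' : ZMod ℓ, f v = f v' := by
    have key : ∀ (m : ℕ) (v : ZMod ℓ), f v = f (v - m) := by
      intro m
      induction m with
      | zero => simp
      | succ m ih =>
          intro v
          rw [ih v, hstep (v - m)]
          congr 1
          push_cast
          ring
    intro v v'
    have h3 : v' = v - ((v - v').val : ℕ) := by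
      rw [ZMod.natCast_val, ZMod.cast_id]; ring
    rw [h3, ← key]
  have hsum : ∑ v : ZMod ℓ, f v = n * ℓ := by
    have h4 : ∑ v : ZMod ℓ, f v = Multiset.card (T.map Prod.fst) := by
      rw [← Multiset.toFinset_sum_count_eq (T.map Prod.fst)]
      refine (Finset.sum_subset (Finset.subset_univ _) ?_).symm
      intro a _ ha
      rw [Multiset.count_eq_zero]
      simpa using ha
    rw [h4, Multiset.card_map, hdeg]
  have hfn : ∀ v : ZMod ℓ, f v = n := by
    intro v
    have hcard : (Finset.univ : Finset (ZMod ℓ)).card = ℓ := by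
      simp [Finset.card_univ, ZMod.card]
    have h5 : ∑ v' : ZMod ℓ, f v' = ℓ * f v := by
      rw [Finset.sum_congr rfl fun v' _ => hconst v' v, Finset.sum_const, smul_eq_mul, hcard]
    have h6 : ℓ * f v = n * ℓ := by rw [← h5, hsum]
    exact Nat.eq_of_mul_eq_mul_left hℓ (by rw [h6, Nat.mul_comm])
  have hFv : ∀ v : ZMod ℓ, Fvert α u v = f v := by
    intro v
    show Fvert α u v = Multiset.count v (T.map Prod.fst)
    rw [hmapfst, hu]
    have h7 : (∑ i, u i • ({α i} : Multiset (List (ZMod ℓ)))).bind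
        (fun c => (c : Multiset (ZMod ℓ))) = ∑ i, u i • ((α i : Multiset (ZMod ℓ))) := by
      induction (Finset.univ : Finset (Fin k)) using Finset.induction with
      | empty => simp
      | insert a s hnm ih =>
          rw [Finset.sum_insert hnm, Finset.sum_insert hnm, Multiset.add_bind, ih,
            bind_nsmul_aux, Multiset.singleton_bind]
    rw [h7, Multiset.count_sum']
    simp [Fvert, Multiset.count_nsmul]
  exact ⟨fun v => by rw [hFv, hfn], fun v v' => by rw [hFv, hFv, hconst v v']⟩
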